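/- Let B ⊆ V be internally near-matched for M with base vertex b, and let P be an augmenting path such that the edges of P lying in γ(B) form a nonempty even-length alternating path S. Then b is an endpoint of S, the edge of S incident to b is unmatched, and the edge of S at the other endpoint is matched. Moreover, if b is free then P contains exactly one edge with exactly one end in B, while if b is matched (necessarily to a vertex outside B) then P contains exactly two edges with exactly one end in B, one of which is the matched edge incident to b. -/

import Mathlib

open SimpleGraph

attribute [local instance] Classical.propDecidable

variable {V : Type*}

def IsMatchingSet (G : SimpleGraph V) (M : Finset (Sym2 V)) : Prop :=
  (∀ e ∈ M, e ∈ G.edgeSet) ∧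
    ∀ e ∈ M, ∀ f ∈ M, e ≠ f → ∀ v : V, v ∈ e → v ∉ f

def IsFree (M : Finset (Sym2 V)) (v : V) : Prop := ∀ e ∈ M, v ∉ e

def IsAlternating (M : Finset (Sym2 V)) {G : SimpleGraph V} {u v : V}
    (P : G.Walk u v) : Prop :=
  List.Chain' (fun e f => ¬(e ∈ M ↔ f ∈ M)) P.edges

def IsAugmenting (M : Finset (Sym2 V)) {G : SimpleGraph V} {f₁ f₂ : V}
    (P : G.Walk f₁ f₂) : Prop :=
  P.IsPath ∧ f₁ ≠ f₂ ∧ IsFree M f₁ ∧ IsFree M f₂ ∧ IsAlternating M P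

noncomputable def pathWeight (w : Sym2 V → ℝ) (M : Finset (Sym2 V)) {G : SimpleGraph V}
    {u v : V} (P : G.Walk u v) : ℝ :=
  ((P.edges.filter fun e => e ∉ M).map w).sum -
    ((P.edges.filter fun e => e ∈ M).map w).sum

def InternallyNearMatched (M : Finset (Sym2 V)) (B : Finset V) (b : V) : Prop :=
  b ∈ B ∧ (∀ v ∈ B, s(b, v) ∉ M) ∧
    ∀ v ∈ B, v ≠ b → ∃ u ∈ B, u ≠ v ∧ s(u, v) ∈ M

noncomputable def dualLoad (y : V → ℝ) (𝓑 : Finset (Finset V)) (z : Finset V → ℝ)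
    (u v : V) : ℝ :=
  y u + y v + ∑ B ∈ 𝓑.filter (fun B => u ∈ B ∧ v ∈ B), z B

def Dominated (w : Sym2 V → ℝ) (y : V → ℝ) (𝓑 : Finset (Finset V)) (z : Finset V → ℝ)
    (u v : V) : Prop :=
  w s(u, v) ≤ dualLoad y 𝓑 z u v

def Tight (w : Sym2 V → ℝ) (y : V → ℝ) (𝓑 : Finset (Finset V)) (z : Finset V → ℝ)
    (u v : V) : Prop :=
  w s(u, v) = dualLoad y 𝓑 z u v

lemma walk_edges_getElem {G : SimpleGraph V} {u v : V} (p : G.Walk u v) :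
    ∀ (j : ℕ) (hj : j < p.edges.length),
      p.edges[j]'hj = s(p.getVert j, p.getVert (j+1)) := by
  induction p with
  | nil => simp
  | cons h q ih =>
    intro j hj
    cases j with
    | zero => simp [Walk.edges_cons, Walk.getVert_zero, Walk.getVert_cons_succ]
    | succ j =>
      simp only [Walk.edges_cons, List.getElem_cons_succ, Walk.getVert_cons_succ]
      exact ih j (by simpa [Walk.edges_cons] using hj)

lemma walk_support_getElem {G : SimpleGraph V} {u v : V} (p : G.Walk u v) :
    ∀ (j : ℕ) (hj : j < p.support.length), p.support[j]'hj = p.getVert j := by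
  induction p with
  | nil =>
    intro j hj
    simp only [Walk.support_nil, List.length_cons, List.length_nil] at hj
    have : j = 0 := by omega
    subst this; simp
  | cons h q ih =>
    intro j hj
    cases j with
    | zero => simp
    | succ j =>
      simp only [Walk.support_cons, List.getElem_cons_succ, Walk.getVert_cons_succ]
      exact ih j (by simpa using hj)

lemma path_getVert_inj {G : SimpleGraph V} {u v : V} {p : G.Walk u v} (hp : p.IsPath)
    {j k : ℕ} (hj : j ≤ p.length) (hk : k ≤ p.length)
    (h : p.getVert j = p.getVert k) : j = k := by
  have hs := hp.support_nodup
  have hl : p.support.length = p.length + 1 := by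
    simp [Walk.length_support]
  have hj' : j < p.support.length := by omega
  have hk' : k < p.support.length := by omega
  rw [← walk_support_getElem p j hj', ← walk_support_getElem p k hk'] at h
  exact (List.Nodup.getElem_inj_iff hs).mp h

lemma getElem_idx_congr {α : Type*} (l : List α) {i j : ℕ} (h : i = j) {hi : i < l.length} :
    l[i]'hi = l[j]'(h ▸ hi) := by subst h; rfl

lemma filt_len_card {α : Type*} (p : α → Bool) (l : List α) :
    (l.filter p).length =
      ((Finset.range l.length).filter
        (fun j => ∃ h : j < l.length, p (l[j]'h) = true)).card := by
  induction l using List.reverseRecOn with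
  | nil => simp
  | append_singleton l a ih =>
    rw [List.filter_append, List.length_append, ih]
    have hL : (l ++ [a]).length = l.length + 1 := by simp
    have hcong : ∀ j ∈ Finset.range l.length,
        ((∃ h : j < (l ++ [a]).length, p ((l ++ [a])[j]'h) = true) ↔
          (∃ h : j < l.length, p (l[j]'h) = true)) := by
      intro j hj
      simp only [Finset.mem_range] at hj
      constructor
      · rintro ⟨h, hp⟩
        exact ⟨hj, by rwa [List.getElem_append_left hj] at hp⟩
      · rintro ⟨h, hp⟩
        refine ⟨by simp; omega, ?_⟩
        rw [List.getElem_append_left hj]; exact hp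
    rw [show Finset.range (l ++ [a]).length = Finset.range (l.length + 1) from by rw [hL],
      Finset.range_add_one, Finset.filter_insert, Finset.filter_congr hcong]
    by_cases hpa : p a = true
    · have hend : ∃ h : l.length < (l ++ [a]).length, p ((l ++ [a])[l.length]'h) = true := by
        refine ⟨by simp, ?_⟩
        rw [List.getElem_concat_length rfl]; exact hpa
      rw [if_pos hend, Finset.card_insert_of_notMem (by simp)]
      simp [hpa]
    · have hend : ¬ ∃ h : l.length < (l ++ [a]).length, p ((l ++ [a])[l.length]'h) = true := by
        rintro ⟨h, hp⟩
        rw [List.getElem_concat_length rfl] at hp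
        exact hpa hp
      rw [if_neg hend]
      simp [hpa]

set_option maxHeartbeats 1000000 in
theorem blossom_traversal_structure
    {V : Type*} (G : SimpleGraph V) (M : Finset (Sym2 V))
    (B : Finset V) (b : V)
    (hM : IsMatchingSet G M)
    (hB : InternallyNearMatched M B b)
    {f₁ f₂ : V} (P : G.Walk f₁ f₂) (hP : IsAugmenting M P)
    (i n : ℕ) (hn : 0 < n) (hEven : Even n) (hin : i + n ≤ P.edges.length)
    (hchar : ∀ (j : ℕ) (hj : j < P.edges.length),
      (∀ x ∈ P.edges[j]'hj, x ∈ B) ↔ i ≤ j ∧ j < i + n) :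
    (b = P.getVert i ∨ b = P.getVert (i + n)) ∧
      (b = P.getVert i →
        P.edges[i]'(by omega) ∉ M ∧ P.edges[i + n - 1]'(by omega) ∈ M) ∧
      (b = P.getVert (i + n) →
        P.edges[i + n - 1]'(by omega) ∉ M ∧ P.edges[i]'(by omega) ∈ M) ∧
      (IsFree M b →
        (P.edges.filter fun e => (∃ x ∈ e, x ∈ B) ∧ ∃ x ∈ e, x ∉ B).length = 1) ∧
      (∀ b' : V, s(b, b') ∈ M →
        (P.edges.filter fun e => (∃ x ∈ e, x ∈ B) ∧ ∃ x ∈ e, x ∉ B).length = 2 ∧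
          s(b, b') ∈ P.edges ∧ b' ∉ B) := by
  obtain ⟨hPath, hne, hfr1, hfr2, hAlt⟩ := hP
  have hLen : P.edges.length = P.length := Walk.length_edges P
  have eidx := walk_edges_getElem P
  have hinj : ∀ {j k : ℕ}, j ≤ P.length → k ≤ P.length →
      P.getVert j = P.getVert k → j = k := fun hj hk h => path_getVert_inj hPath hj hk h
  have altstep : ∀ (j : ℕ) (hj : j + 1 < P.edges.length),
      (P.edges[j]'(by omega) ∈ M ↔ P.edges[j+1]'hj ∉ M) := by
    intro j hj
    have h := List.isChain_iff_getElem.mp hAlt j (by omega)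
    tauto
  have huniq : ∀ e ∈ M, ∀ f ∈ M, ∀ x : V, x ∈ e → x ∈ f → e = f := by
    intro e he f hf x hxe hxf
    by_contra hne'
    exact hM.2 e he f hf hne' x hxe hxf
  -- parity of alternation
  have parity : ∀ (d j : ℕ) (h : j + d < P.edges.length),
      (P.edges[j+d]'h ∈ M ↔ (P.edges[j]'(by omega) ∈ M ↔ Even d)) := by
    intro d
    induction d with
    | zero => simp
    | succ d ih =>
      intro j h
      have h1 := altstep (j+d) (by omega)
      have h2 := ih j (by omega)
      rw [Nat.even_add_one]
      tauto
  have par : ∀ (m : ℕ) (h1 : i ≤ m) (hm : m < P.edges.length),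
      (P.edges[m]'hm ∈ M ↔ (P.edges[i]'(by omega) ∈ M ↔ Even (m - i))) := by
    intro m h1 hm
    have hp := parity (m - i) i (by omega)
    rwa [getElem_idx_congr P.edges (show i + (m - i) = m by omega)] at hp
  -- vertices of the window are in B
  have hvB : ∀ k, i ≤ k → k ≤ i + n → P.getVert k ∈ B := by
    intro k h1 h2
    rcases lt_or_eq_of_le h2 with h2 | h2
    · exact (hchar k (by omega)).mpr ⟨h1, h2⟩ _
        (by rw [eidx k (by omega)]; exact Sym2.mem_mk_left _ _)
    · have := (hchar (i+n-1) (by omega)).mpr ⟨by omega, by omega⟩ (P.getVert (i+n-1+1))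
        (by rw [eidx (i+n-1) (by omega)]; exact Sym2.mem_mk_right _ _)
      rw [show i+n-1+1 = i+n by omega] at this
      rw [h2]; exact this
  obtain ⟨hbB, hbnoM, hmatched⟩ := hB
  -- main dichotomy
  have main : (P.edges[i]'(by omega) ∉ M ∧ b = P.getVert i) ∨
      (P.edges[i]'(by omega) ∈ M ∧ b = P.getVert (i + n)) := by
    by_cases hMi : P.edges[i]'(by omega) ∈ M
    · right
      refine ⟨hMi, ?_⟩
      -- matched window edges: even offsets
      have hme : ∀ (m : ℕ) (h1 : i ≤ m) (h2 : m < i + n), (P.edges[m]'(by omega) ∈ M ↔ Even (m - i)) := by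
        intro m h1 h2
        rw [par m h1 (by omega)]
        tauto
      -- b is none of getVert i .. getVert (i+n-1)
      have hbnot : ∀ (k : ℕ) (h1 : i ≤ k) (h2 : k ≤ i + n - 1), b ≠ P.getVert k := by
        intro k h1 h2 hbk
        rcases Nat.even_or_odd (k - i) with hpar | hpar
        · -- edge k is matched, b = getVert k is its left end
          have hm : P.edges[k]'(by omega) ∈ M := (hme k h1 (by omega)).mpr hpar
          have hw : P.getVert (k+1) ∈ B := hvB (k+1) (by omega) (by omega)
          apply hbnoM _ hw
          rw [eidx k (by omega), ← hbk] at hm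
          exact hm
        · -- edge (k-1) is matched, b = getVert k is its right end
          have hk0 : 1 ≤ k := by
            rcases hpar with ⟨t, ht⟩; omega
          have hk1 : i ≤ k - 1 := by
            rcases hpar with ⟨t, ht⟩; omega
          have hm : P.edges[k-1]'(by omega) ∈ M := by
            refine (hme (k-1) hk1 (by omega)).mpr ?_
            rcases hpar with ⟨t, ht⟩
            exact ⟨t, by omega⟩
          have hw : P.getVert (k-1) ∈ B := hvB (k-1) hk1 (by omega)
          apply hbnoM _ hw
          rw [eidx (k-1) (by omega), show k-1+1 = k by omega, ← hbk, Sym2.eq_swap] at hm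
          exact hm
      by_contra hbne
      have hgB : P.getVert (i+n) ∈ B := hvB (i+n) (by omega) le_rfl
      have hgb : P.getVert (i+n) ≠ b := fun h => hbne h.symm
      obtain ⟨u, huB, hune, huM⟩ := hmatched _ hgB hgb
      rcases lt_or_eq_of_le hin with hlt | heq
      · -- edge i+n exists and is matched
        have hm1 : P.edges[i+n-1]'(by omega) ∉ M := by
          rw [par (i+n-1) (by omega) (by omega)]
          rw [show i+n-1-i = n-1 by omega]
          rcases hEven with ⟨t, ht⟩
          simp only [hMi, true_iff]
          intro h; rcases h with ⟨s, hs⟩; omega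
        have hm2 : P.edges[i+n]'(by omega) ∈ M := by
          have h := altstep (i+n-1) (by rw [show i+n-1+1 = i+n by omega]; omega)
          rw [getElem_idx_congr P.edges (show i+n-1+1 = i+n by omega)] at h
          tauto
        have heq2 : s(u, P.getVert (i+n)) = P.edges[i+n]'(by omega) := by
          apply huniq _ huM _ hm2 (P.getVert (i+n)) (Sym2.mem_mk_right _ _)
          rw [eidx (i+n) (by omega)]
          exact Sym2.mem_mk_left _ _
        have : ∀ x ∈ P.edges[i+n]'(by omega), x ∈ B := by
          intro x hx
          rw [← heq2] at hx
          rcases Sym2.mem_iff.mp hx with rfl | rfl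
          exacts [huB, hgB]
        have := (hchar (i+n) (by omega)).mp this
        omega
      · -- i+n = length: endpoint f₂ is free, contradiction
        have hvf : P.getVert (i+n) = f₂ := by
          rw [show i+n = P.length by omega]
          exact Walk.getVert_length P
        rw [hvf] at huM
        exact hfr2 _ huM (Sym2.mem_mk_right _ _)
    · left
      refine ⟨hMi, ?_⟩
      have hme : ∀ (m : ℕ) (h1 : i ≤ m) (h2 : m < i + n), (P.edges[m]'(by omega) ∈ M ↔ ¬ Even (m - i)) := by
        intro m h1 h2
        rw [par m h1 (by omega)]
        tauto
      have hbnot : ∀ (k : ℕ) (h1 : i + 1 ≤ k) (h2 : k ≤ i + n), b ≠ P.getVert k := by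
        intro k h1 h2 hbk
        rcases Nat.even_or_odd (k - i) with hpar | hpar
        · -- k - i even, k ≥ i+1 so k ≥ i+2; edge (k-1) is matched
          have hk2 : i + 2 ≤ k := by rcases hpar with ⟨t, ht⟩; omega
          have hm : P.edges[k-1]'(by omega) ∈ M := by
            refine (hme (k-1) (by omega) (by omega)).mpr ?_
            intro h; rcases h with ⟨t, ht⟩; rcases hpar with ⟨s, hs⟩; omega
          have hw : P.getVert (k-1) ∈ B := hvB (k-1) (by omega) (by omega)
          apply hbnoM _ hw
          rw [eidx (k-1) (by omega), show k-1+1 = k by omega, ← hbk, Sym2.eq_swap] at hm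
          exact hm
        · -- k - i odd: k < i+n (n even); edge k is matched
          have hklt : k < i + n := by
            rcases hpar with ⟨t, ht⟩; rcases hEven with ⟨s, hs⟩; omega
          have hm : P.edges[k]'(by omega) ∈ M := by
            refine (hme k (by omega) hklt).mpr ?_
            intro h; rcases h with ⟨t, ht⟩; rcases hpar with ⟨s, hs⟩; omega
          have hw : P.getVert (k+1) ∈ B := hvB (k+1) (by omega) (by omega)
          apply hbnoM _ hw
          rw [eidx k (by omega), ← hbk] at hm
          exact hm
      by_contra hbne
      have hgB : P.getVert i ∈ B := hvB i le_rfl (by omega)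
      have hgb : P.getVert i ≠ b := fun h => hbne h.symm
      obtain ⟨u, huB, hune, huM⟩ := hmatched _ hgB hgb
      rcases Nat.eq_zero_or_pos i with h0 | hpos
      · have hvf : P.getVert i = f₁ := by rw [h0]; exact Walk.getVert_zero P
        rw [hvf] at huM
        exact hfr1 _ huM (Sym2.mem_mk_right _ _)
      · have hm1 : P.edges[i-1]'(by omega) ∈ M := by
          have h := altstep (i-1) (by rw [show i-1+1 = i by omega]; omega)
          rw [getElem_idx_congr P.edges (show i-1+1 = i by omega)] at h
          tauto
        have heq2 : s(u, P.getVert i) = P.edges[i-1]'(by omega) := by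
          apply huniq _ huM _ hm1 (P.getVert i) (Sym2.mem_mk_right _ _)
          rw [eidx (i-1) (by omega), show i-1+1 = i by omega]
          exact Sym2.mem_mk_right _ _
        have : ∀ x ∈ P.edges[i-1]'(by omega), x ∈ B := by
          intro x hx
          rw [← heq2] at hx
          rcases Sym2.mem_iff.mp hx with rfl | rfl
          exacts [huB, hgB]
        have := (hchar (i-1) (by omega)).mp this
        omega
  -- vertices outside the window are not in B
  have hnotB : ∀ k, k ≤ P.length → (k < i ∨ i + n < k) → P.getVert k ∉ B := by
    intro k hk hout hkB
    have hkb : P.getVert k ≠ b := by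
      intro h
      rcases main with ⟨-, hb⟩ | ⟨-, hb⟩
      · have := hinj hk (by omega) (h.trans hb)
        omega
      · have := hinj hk (by omega) (h.trans hb)
        omega
    obtain ⟨u, huB, hune, huM⟩ := hmatched _ hkB hkb
    rcases Nat.eq_zero_or_pos k with h0 | hkpos
    · have hvf : P.getVert k = f₁ := by rw [h0]; exact Walk.getVert_zero P
      rw [hvf] at huM
      exact hfr1 _ huM (Sym2.mem_mk_right _ _)
    rcases lt_or_eq_of_le hk with hklt | hkeq
    · -- interior: one of edges k-1, k is matched
      have hstep := altstep (k-1) (by rw [show k-1+1 = k by omega]; omega)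
      rw [getElem_idx_congr P.edges (show k-1+1 = k by omega)] at hstep
      by_cases hm : P.edges[k]'(by omega) ∈ M
      · have heq2 : s(u, P.getVert k) = P.edges[k]'(by omega) := by
          apply huniq _ huM _ hm (P.getVert k) (Sym2.mem_mk_right _ _)
          rw [eidx k (by omega)]
          exact Sym2.mem_mk_left _ _
        have hall : ∀ x ∈ P.edges[k]'(by omega), x ∈ B := by
          intro x hx
          rw [← heq2] at hx
          rcases Sym2.mem_iff.mp hx with rfl | rfl
          exacts [huB, hkB]
        have := (hchar k (by omega)).mp hall
        omega
      · have hm' : P.edges[k-1]'(by omega) ∈ M := by tauto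
        have heq2 : s(u, P.getVert k) = P.edges[k-1]'(by omega) := by
          apply huniq _ huM _ hm' (P.getVert k) (Sym2.mem_mk_right _ _)
          rw [eidx (k-1) (by omega), show k-1+1 = k by omega]
          exact Sym2.mem_mk_right _ _
        have hall : ∀ x ∈ P.edges[k-1]'(by omega), x ∈ B := by
          intro x hx
          rw [← heq2] at hx
          rcases Sym2.mem_iff.mp hx with rfl | rfl
          exacts [huB, hkB]
        have := (hchar (k-1) (by omega)).mp hall
        omega
    · have hvf : P.getVert k = f₂ := by rw [hkeq]; exact Walk.getVert_length P
      rw [hvf] at huM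
      exact hfr2 _ huM (Sym2.mem_mk_right _ _)
  have memB_iff : ∀ k, k ≤ P.length → (P.getVert k ∈ B ↔ i ≤ k ∧ k ≤ i + n) := by
    intro k hk
    constructor
    · intro h
      by_contra hc
      exact hnotB k hk (by omega) h
    · rintro ⟨h1, h2⟩
      exact hvB k h1 h2
  -- boundary edge characterization
  have predIff : ∀ (j : ℕ) (hj : j < P.edges.length),
      (((∃ x ∈ P.edges[j]'hj, x ∈ B) ∧ ∃ x ∈ P.edges[j]'hj, x ∉ B) ↔
        ((0 < i ∧ j = i - 1) ∨ j = i + n)) := by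
    intro j hj
    rw [eidx j hj]
    have h1 := memB_iff j (by omega)
    have h2 := memB_iff (j+1) (by omega)
    constructor
    · rintro ⟨⟨x, hx, hxB⟩, ⟨y, hy, hyB⟩⟩
      rw [Sym2.mem_iff] at hx hy
      have c1 : P.getVert j ∈ B → i ≤ j ∧ j ≤ i + n := h1.mp
      have c2 : P.getVert (j+1) ∈ B → i ≤ j+1 ∧ j+1 ≤ i + n := h2.mp
      have d1 : ¬ P.getVert j ∈ B → ¬(i ≤ j ∧ j ≤ i + n) := fun h hh => h (h1.mpr hh)
      have d2 : ¬ P.getVert (j+1) ∈ B → ¬(i ≤ j+1 ∧ j+1 ≤ i + n) := fun h hh => h (h2.mpr hh)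
      rcases hx with rfl | rfl <;> rcases hy with rfl | rfl
      · exact absurd hxB hyB
      · have := c1 hxB; have := d2 hyB; omega
      · have := c2 hxB; have := d1 hyB; omega
      · exact absurd hxB hyB
    · rintro (⟨hi0, rfl⟩ | rfl)
      · constructor
        · refine ⟨P.getVert (i-1+1), Sym2.mem_mk_right _ _, ?_⟩
          rw [show i-1+1 = i by omega]
          exact hvB i le_rfl (by omega)
        · exact ⟨P.getVert (i-1), Sym2.mem_mk_left _ _,
            hnotB (i-1) (by omega) (by omega)⟩
      · constructor
        · exact ⟨P.getVert (i+n), Sym2.mem_mk_left _ _, hvB (i+n) (by omega) le_rfl⟩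
        · exact ⟨P.getVert (i+n+1), Sym2.mem_mk_right _ _,
            hnotB (i+n+1) (by omega) (by omega)⟩
  -- case-specific endpoint facts
  have hInL : b = P.getVert i → i + n < P.edges.length := by
    intro hb
    rcases lt_or_eq_of_le hin with h | h
    · exact h
    exfalso
    have hvf : P.getVert (i+n) = f₂ := by
      rw [show i+n = P.length by omega]; exact Walk.getVert_length P
    have hBf : P.getVert (i+n) ∈ B := hvB (i+n) (by omega) le_rfl
    have hbf : P.getVert (i+n) ≠ b := by
      intro h'
      have := hinj (by omega) (by omega) (h'.trans hb)
      omega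
    obtain ⟨u, huB, -, huM⟩ := hmatched _ hBf hbf
    rw [hvf] at huM
    exact hfr2 _ huM (Sym2.mem_mk_right _ _)
  have hI0 : b = P.getVert (i + n) → 0 < i := by
    intro hb
    rcases Nat.eq_zero_or_pos i with h0 | h
    · exfalso
      have hvf : P.getVert i = f₁ := by rw [h0]; exact Walk.getVert_zero P
      have hBf : P.getVert i ∈ B := hvB i le_rfl (by omega)
      have hbf : P.getVert i ≠ b := by
        intro h'
        have := hinj (by omega) (by omega) (h'.trans hb)
        omega
      obtain ⟨u, huB, -, huM⟩ := hmatched _ hBf hbf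
      rw [hvf] at huM
      exact hfr1 _ huM (Sym2.mem_mk_right _ _)
    · exact h
  have hgne : P.getVert i ≠ P.getVert (i + n) := by
    intro h
    have := hinj (by omega) (by omega) h
    omega
  -- counting helper
  have hcount : ∀ (q : Sym2 V → Bool) (S : Finset ℕ) (m : ℕ),
      ((Finset.range P.edges.length).filter
        (fun j => ∃ h : j < P.edges.length, q (P.edges[j]'h) = true)) = S →
      S.card = m →
      (P.edges.filter q).length = m := by
    intro q S m hS hm
    rw [filt_len_card q P.edges, hS, hm]
  refine ⟨?_, ?_, ?_, ?_, ?_⟩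
  · rcases main with ⟨-, hb⟩ | ⟨-, hb⟩
    exacts [Or.inl hb, Or.inr hb]
  · intro hb
    rcases main with ⟨hMi, -⟩ | ⟨hMi, hb'⟩
    · refine ⟨hMi, ?_⟩
      rw [par (i+n-1) (by omega) (by omega), show i+n-1-i = n-1 by omega]
      rcases hEven with ⟨t, ht⟩
      simp only [hMi, false_iff, iff_false]
      rintro ⟨s, hs⟩; omega
    · exact absurd (hb.symm.trans hb') hgne
  · intro hb
    rcases main with ⟨hMi, hb'⟩ | ⟨hMi, -⟩
    · exact absurd (hb'.symm.trans hb) hgne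
    · constructor
      · rw [par (i+n-1) (by omega) (by omega), show i+n-1-i = n-1 by omega]
        rcases hEven with ⟨t, ht⟩
        simp only [hMi, true_iff]
        rintro ⟨s, hs⟩; omega
      · exact hMi
  · -- b free
    intro hfree
    rcases main with ⟨hMi, hb⟩ | ⟨hMi, hb⟩
    · -- b = getVert i; show i = 0
      have hi0 : i = 0 := by
        by_contra h
        have hm1 : P.edges[i-1]'(by omega) ∈ M := by
          have hs := altstep (i-1) (by rw [show i-1+1 = i by omega]; omega)
          rw [getElem_idx_congr P.edges (show i-1+1 = i by omega)] at hs
          tauto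
        apply hfree _ hm1
        rw [eidx (i-1) (by omega), show i-1+1 = i by omega, ← hb]
        exact Sym2.mem_mk_right _ _
      have hnL := hInL hb
      refine hcount _ {i+n} _ ?_ (by simp)
      ext j
      simp only [Finset.mem_filter, Finset.mem_range, Finset.mem_singleton, decide_eq_true_eq]
      constructor
      · rintro ⟨hjr, h, hp⟩
        have := (predIff j h).mp hp
        omega
      · rintro rfl
        exact ⟨hnL, hnL, (predIff _ hnL).mpr (Or.inr rfl)⟩
    · -- b = getVert (i+n); show i+n = length
      have hi0 := hI0 hb
      have hnL : i + n = P.edges.length := by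
        by_contra h
        have hm0 : P.edges[i+n-1]'(by omega) ∉ M := by
          rw [par (i+n-1) (by omega) (by omega), show i+n-1-i = n-1 by omega]
          rcases hEven with ⟨t, ht⟩
          simp only [hMi, true_iff]
          rintro ⟨s, hs⟩; omega
        have hm1 : P.edges[i+n]'(by omega) ∈ M := by
          have hs := altstep (i+n-1) (by rw [show i+n-1+1 = i+n by omega]; omega)
          rw [getElem_idx_congr P.edges (show i+n-1+1 = i+n by omega)] at hs
          tauto
        apply hfree _ hm1
        rw [eidx (i+n) (by omega), ← hb]
        exact Sym2.mem_mk_left _ _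
      refine hcount _ {i-1} _ ?_ (by simp)
      ext j
      simp only [Finset.mem_filter, Finset.mem_range, Finset.mem_singleton, decide_eq_true_eq]
      constructor
      · rintro ⟨hjr, h, hp⟩
        have := (predIff j h).mp hp
        omega
      · rintro rfl
        refine ⟨by omega, by omega, (predIff _ (by omega)).mpr (Or.inl ⟨hi0, rfl⟩)⟩
  · -- b matched to b'
    intro b' hb'M
    have hb'B : b' ∉ B := fun h => hbnoM b' h hb'M
    rcases main with ⟨hMi, hb⟩ | ⟨hMi, hb⟩
    · -- b = getVert i
      have hi0 : 0 < i := by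
        rcases Nat.eq_zero_or_pos i with h0 | h
        · exfalso
          have hvf : P.getVert i = f₁ := by rw [h0]; exact Walk.getVert_zero P
          rw [hvf] at hb
          exact hfr1 _ hb'M (hb ▸ Sym2.mem_mk_left b b')
        · exact h
      have hnL := hInL hb
      have hm1 : P.edges[i-1]'(by omega) ∈ M := by
        have hs := altstep (i-1) (by rw [show i-1+1 = i by omega]; omega)
        rw [getElem_idx_congr P.edges (show i-1+1 = i by omega)] at hs
        tauto
      have heq2 : s(b, b') = P.edges[i-1]'(by omega) := by
        apply huniq _ hb'M _ hm1 b (Sym2.mem_mk_left _ _)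
        rw [eidx (i-1) (by omega), show i-1+1 = i by omega, ← hb]
        exact Sym2.mem_mk_right _ _
      refine ⟨?_, ?_, hb'B⟩
      · refine hcount _ {i-1, i+n} _ ?_ (by rw [Finset.card_insert_of_notMem (by simp; omega)]; simp)
        ext j
        simp only [Finset.mem_filter, Finset.mem_range, Finset.mem_insert,
          Finset.mem_singleton, decide_eq_true_eq]
        constructor
        · rintro ⟨hjr, h, hp⟩
          have := (predIff j h).mp hp
          omega
        · rintro (rfl | rfl)
          · exact ⟨by omega, by omega, (predIff _ (by omega)).mpr (Or.inl ⟨hi0, rfl⟩)⟩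
          · exact ⟨hnL, hnL, (predIff _ hnL).mpr (Or.inr rfl)⟩
        -- card computation handled after ext? no: hcount needs S then card = 2
      · rw [heq2]
        exact List.getElem_mem _
    · -- b = getVert (i+n)
      have hi0 := hI0 hb
      have hnL : i + n < P.edges.length := by
        rcases lt_or_eq_of_le hin with h | h
        · exact h
        exfalso
        have hvf : P.getVert (i+n) = f₂ := by
          rw [show i+n = P.length by omega]; exact Walk.getVert_length P
        rw [hvf] at hb
        exact hfr2 _ hb'M (hb ▸ Sym2.mem_mk_left b b')
      have hm0 : P.edges[i+n-1]'(by omega) ∉ M := by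
        rw [par (i+n-1) (by omega) (by omega), show i+n-1-i = n-1 by omega]
        rcases hEven with ⟨t, ht⟩
        simp only [hMi, true_iff]
        rintro ⟨s, hs⟩; omega
      have hm1 : P.edges[i+n]'(by omega) ∈ M := by
        have hs := altstep (i+n-1) (by rw [show i+n-1+1 = i+n by omega]; omega)
        rw [getElem_idx_congr P.edges (show i+n-1+1 = i+n by omega)] at hs
        tauto
      have heq2 : s(b, b') = P.edges[i+n]'(by omega) := by
        apply huniq _ hb'M _ hm1 b (Sym2.mem_mk_left _ _)
        rw [eidx (i+n) (by omega), ← hb]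
        exact Sym2.mem_mk_left _ _
      refine ⟨?_, ?_, hb'B⟩
      · refine hcount _ {i-1, i+n} _ ?_ (by rw [Finset.card_insert_of_notMem (by simp; omega)]; simp)
        ext j
        simp only [Finset.mem_filter, Finset.mem_range, Finset.mem_insert,
          Finset.mem_singleton, decide_eq_true_eq]
        constructor
        · rintro ⟨hjr, h, hp⟩
          have := (predIff j h).mp hp
          omega
        · rintro (rfl | rfl)
          · exact ⟨by omega, by omega, (predIff _ (by omega)).mpr (Or.inl ⟨hi0, rfl⟩)⟩
          · exact ⟨hnL, hnL, (predIff _ hnL).mpr (Or.inr rfl)⟩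
      · rw [heq2]
        exact List.getElem_mem _
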